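/- For 1/4 < θ ≤ 2/7, the identity ∫∫_{1-3θ ≤ β₁ ≤ β₂ ≤ θ, β₁+β₂ ≥ 1/2} dβ₁dβ₂ / (β₁β₂(1-β₁-β₂)) = ∫_{1-2θ}^{1/2} log(θ/(1-θ-α)) / (α(1-α)) dα holds. -/

import Mathlib

open MeasureTheory Set

/-- Auxiliary: an indicator of a bounded measurable set with a bounded
measurable function is integrable on the product measure. -/
lemma aux_integrable_indicator {s : Set (ℝ × ℝ)} (hs : MeasurableSet s)
    (hsub : s ⊆ Set.Icc ((-1 : ℝ), (-1 : ℝ)) (1, 1))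
    {g : ℝ × ℝ → ℝ} (hg : Measurable g)
    (hC : ∀ p ∈ s, |g p| ≤ 50) :
    Integrable (s.indicator g) ((volume : Measure ℝ).prod volume) := by
  have hbox : MeasurableSet (Set.Icc ((-1 : ℝ), (-1 : ℝ)) (1, 1)) := measurableSet_Icc
  have hvol : ((volume : Measure ℝ).prod volume) (Set.Icc ((-1 : ℝ), (-1 : ℝ)) (1, 1)) < ⊤ := by
    rw [← Measure.volume_eq_prod]
    exact isCompact_Icc.measure_lt_top
  have hint : Integrable ((Set.Icc ((-1 : ℝ), (-1 : ℝ)) (1, 1)).indicator fun _ => (50 : ℝ))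
      ((volume : Measure ℝ).prod volume) := by
    rw [integrable_indicator_iff hbox]
    exact integrableOn_const hvol.ne
  refine hint.mono' ((hg.indicator hs).aestronglyMeasurable) ?_
  filter_upwards with p
  by_cases hp : p ∈ s
  · rw [Set.indicator_of_mem hp, Set.indicator_of_mem (hsub hp), Real.norm_eq_abs]
    exact hC p hp
  · rw [Set.indicator_of_notMem hp, norm_zero]
    by_cases hp2 : p ∈ Set.Icc ((-1:ℝ),(-1:ℝ)) (1,1)
    · rw [Set.indicator_of_mem hp2]; norm_num
    · rw [Set.indicator_of_notMem hp2]

theorem double_integral_identity (θ : ℝ) (h1 : 1 / 4 < θ) (h2 : θ ≤ 2 / 7) :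
    (∫ p in {p : ℝ × ℝ |
        1 - 3 * θ ≤ p.1 ∧ p.1 ≤ p.2 ∧ p.2 ≤ θ ∧ 1 / 2 ≤ p.1 + p.2},
      (p.1 * p.2 * (1 - p.1 - p.2))⁻¹) =
    ∫ α in (1 - 2 * θ)..(1 / 2), Real.log (θ / (1 - θ - α)) / (α * (1 - α)) := by
  set f : ℝ × ℝ → ℝ := fun p => (p.1 * p.2 * (1 - p.1 - p.2))⁻¹ with hf
  set S : Set (ℝ × ℝ) := {p | 1 / 2 ≤ p.1 + p.2 ∧ p.1 ≤ p.2 ∧ p.2 ≤ θ} with hSdef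
  -- the original set equals the simplified set S
  have hset : {p : ℝ × ℝ |
      1 - 3 * θ ≤ p.1 ∧ p.1 ≤ p.2 ∧ p.2 ≤ θ ∧ 1 / 2 ≤ p.1 + p.2} = S := by
    ext p
    simp only [hSdef, Set.mem_setOf_eq]
    constructor
    · rintro ⟨_, hb, hc, hd⟩; exact ⟨hd, hb, hc⟩
    · rintro ⟨ha, hb, hc⟩; exact ⟨by linarith, hb, hc, ha⟩
  have hSmeas : MeasurableSet S := by
    have : S = {p : ℝ × ℝ | 1 / 2 ≤ p.1 + p.2} ∩
        ({p : ℝ × ℝ | p.1 ≤ p.2} ∩ {p : ℝ × ℝ | p.2 ≤ θ}) := rfl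
    rw [this]
    exact (measurableSet_le measurable_const (measurable_fst.add measurable_snd)).inter
      ((measurableSet_le measurable_fst measurable_snd).inter
        (measurableSet_le measurable_snd measurable_const))
  have hfmeas : Measurable f :=
    ((measurable_fst.mul measurable_snd).mul
      ((measurable_const.sub measurable_fst).sub measurable_snd)).inv
  -- coordinate bounds on S
  have hcoord : ∀ p ∈ S, 3/14 ≤ p.1 ∧ p.1 ≤ 2/7 ∧ 1/4 ≤ p.2 ∧ p.2 ≤ 2/7 := by
    rintro p ⟨ha, hb, hc⟩
    refine ⟨by linarith, by linarith, by linarith, by linarith⟩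
  have hfb : ∀ p ∈ S, |f p| ≤ 50 := by
    intro p hp
    obtain ⟨b1, b2, b3, b4⟩ := hcoord p hp
    have h5 : (3:ℝ)/7 ≤ 1 - p.1 - p.2 := by linarith
    have hpos : 0 < p.1 * p.2 * (1 - p.1 - p.2) := by positivity
    have hge : (1:ℝ)/50 ≤ p.1 * p.2 * (1 - p.1 - p.2) := by
      calc (1:ℝ)/50 ≤ 3/14 * (1/4) * (3/7) := by norm_num
        _ ≤ p.1 * p.2 * (1 - p.1 - p.2) := by
            apply mul_le_mul _ h5 (by norm_num) (by positivity)
            exact mul_le_mul b1 b3 (by norm_num) (by linarith)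
    have h50 : (p.1 * p.2 * (1 - p.1 - p.2))⁻¹ ≤ 50 := by
      have h := inv_anti₀ (by norm_num : (0:ℝ) < 1/50) hge
      rwa [show ((1:ℝ)/50)⁻¹ = 50 by norm_num] at h
    show |(p.1 * p.2 * (1 - p.1 - p.2))⁻¹| ≤ 50
    rw [abs_of_nonneg (inv_nonneg.2 hpos.le)]
    exact h50
  have hSsub : S ⊆ Set.Icc ((-1 : ℝ), (-1 : ℝ)) (1, 1) := by
    intro p hp
    obtain ⟨b1, b2, b3, b4⟩ := hcoord p hp
    exact Set.mem_Icc.2 ⟨Prod.le_def.2 ⟨show (-1:ℝ) ≤ p.1 by linarith,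
      show (-1:ℝ) ≤ p.2 by linarith⟩, Prod.le_def.2 ⟨show p.1 ≤ (1:ℝ) by linarith,
      show p.2 ≤ (1:ℝ) by linarith⟩⟩
  rw [hset, ← integral_indicator hSmeas]
  rw [Measure.volume_eq_prod]
  have hint1 : Integrable (S.indicator f) ((volume : Measure ℝ).prod volume) :=
    aux_integrable_indicator hSmeas hSsub hfmeas hfb
  rw [MeasureTheory.integral_prod _ hint1]
  -- substitute y = 1 - x - α in the inner integral
  have hsub1 : ∀ x : ℝ, (∫ y, S.indicator f (x, y)) =
      ∫ α, S.indicator f (x, 1 - x - α) := by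
    intro x
    exact (integral_sub_left_eq_self (fun y => S.indicator f (x, y)) volume (1 - x)).symm
  simp only [hsub1]
  -- swap the order of integration
  set Φ : ℝ × ℝ → ℝ × ℝ := fun q => (q.1, 1 - q.1 - q.2) with hΦdef
  have hΦmeas : Measurable Φ :=
    measurable_fst.prodMk ((measurable_const.sub measurable_fst).sub measurable_snd)
  have huncurry : (Function.uncurry fun x α => S.indicator f (x, 1 - x - α)) =
      (Φ ⁻¹' S).indicator (f ∘ Φ) := by
    funext q
    by_cases hq : q ∈ Φ ⁻¹' S
    · rw [Set.indicator_of_mem hq]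
      have : Φ q ∈ S := hq
      simp only [Function.uncurry, Set.indicator_of_mem this, Function.comp]
      exact Set.indicator_of_mem this f
    · rw [Set.indicator_of_notMem hq]
      have : Φ q ∉ S := hq
      simp only [Function.uncurry, Set.indicator_of_notMem this]
      exact Set.indicator_of_notMem this f
  have hint2 : Integrable (Function.uncurry fun x α => S.indicator f (x, 1 - x - α))
      ((volume : Measure ℝ).prod volume) := by
    rw [huncurry]
    refine aux_integrable_indicator (hΦmeas hSmeas) ?_ (hfmeas.comp hΦmeas) ?_
    · intro q hq
      obtain ⟨b1, b2, b3, b4⟩ := hcoord _ hq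
      have c1 : 3/14 ≤ q.1 := b1
      have c2 : q.1 ≤ 2/7 := b2
      have c3 : (1:ℝ)/4 ≤ 1 - q.1 - q.2 := b3
      have c4 : 1 - q.1 - q.2 ≤ 2/7 := b4
      exact Set.mem_Icc.2 ⟨Prod.le_def.2 ⟨show (-1:ℝ) ≤ q.1 by linarith,
        show (-1:ℝ) ≤ q.2 by linarith⟩, Prod.le_def.2 ⟨show q.1 ≤ (1:ℝ) by linarith,
        show q.2 ≤ (1:ℝ) by linarith⟩⟩
    · intro q hq
      exact hfb _ hq
  rw [MeasureTheory.integral_integral_swap hint2]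
  -- evaluate the inner integral for each α
  have hkey : ∀ α : ℝ, (∫ x, S.indicator f (x, 1 - x - α)) =
      (Set.Icc (1 - 2*θ) (1/2)).indicator
        (fun α => Real.log (θ / (1 - θ - α)) / (α * (1 - α))) α := by
    intro α
    by_cases hα : α ∈ Set.Icc (1 - 2*θ) (1/2)
    · have hα1 : 1 - 2*θ ≤ α := hα.1
      have hα2 : α ≤ 1/2 := hα.2
      rw [Set.indicator_of_mem hα]
      set a : ℝ := 1 - α - θ with hadef
      set b : ℝ := (1 - α) / 2 with hbdef
      have hab : a ≤ b := by rw [hadef, hbdef]; linarith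
      have ha0 : 0 < a := by rw [hadef]; linarith
      have hα0 : 0 < α := by linarith
      have h1α : 0 < 1 - α := by linarith
      -- the slice set
      have hslice : (fun x => S.indicator f (x, 1 - x - α)) =
          (Set.Icc a b).indicator (fun x => (x * (1 - x - α) * α)⁻¹) := by
        funext x
        have hmemiff : (x, 1 - x - α) ∈ S ↔ x ∈ Set.Icc a b := by
          simp only [hSdef, Set.mem_setOf_eq, Set.mem_Icc, hadef, hbdef]
          constructor
          · rintro ⟨c1, c2, c3⟩; exact ⟨by linarith, by linarith⟩
          · rintro ⟨c1, c2⟩; exact ⟨by linarith, by linarith, by linarith⟩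
        by_cases hx : x ∈ Set.Icc a b
        · rw [Set.indicator_of_mem (hmemiff.2 hx), Set.indicator_of_mem hx]
          show (x * (1 - x - α) * (1 - x - (1 - x - α)))⁻¹ = (x * (1 - x - α) * α)⁻¹
          congr 1
          ring
        · rw [Set.indicator_of_notMem (fun h => hx (hmemiff.1 h)),
            Set.indicator_of_notMem hx]
      rw [hslice, integral_indicator measurableSet_Icc,
        MeasureTheory.integral_Icc_eq_integral_Ioc,
        ← intervalIntegral.integral_of_le hab]
      -- FTC
      have hderiv : ∀ x ∈ Set.uIcc a b, HasDerivAt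
          (fun x => (Real.log x - Real.log (1 - α - x)) / (α * (1 - α)))
          ((x * (1 - x - α) * α)⁻¹) x := by
        intro x hx
        rw [Set.uIcc_of_le hab] at hx
        obtain ⟨hx1, hx2⟩ := hx
        have hx0 : 0 < x := lt_of_lt_of_le ha0 hx1
        have hx3 : 0 < 1 - α - x := by rw [hbdef] at hx2; linarith
        have d1 : HasDerivAt (fun x : ℝ => Real.log x) x⁻¹ x :=
          Real.hasDerivAt_log (ne_of_gt hx0)
        have d2 : HasDerivAt (fun x : ℝ => 1 - α - x) (-1) x := by
          simpa using (hasDerivAt_id x).const_sub (1 - α)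
        have d3 : HasDerivAt (fun x : ℝ => Real.log (1 - α - x)) (-1 / (1 - α - x)) x :=
          d2.log (ne_of_gt hx3)
        have d4 := (d1.sub d3).div_const (α * (1 - α))
        have heq : (x⁻¹ - -1 / (1 - α - x)) / (α * (1 - α)) =
            (x * (1 - x - α) * α)⁻¹ := by
          rw [show (1:ℝ) - x - α = 1 - α - x by ring]
          rw [mul_comm x (1 - α - x), mul_assoc, mul_inv, mul_inv]
          field_simp
          ring
        rw [heq] at d4
        exact d4
      have hintg : IntervalIntegrable (fun x => (x * (1 - x - α) * α)⁻¹) volume a b := by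
        apply ContinuousOn.intervalIntegrable
        apply ContinuousOn.inv₀
        · fun_prop
        · intro x hx
          rw [Set.uIcc_of_le hab] at hx
          obtain ⟨hx1, hx2⟩ := hx
          have hx0 : 0 < x := lt_of_lt_of_le ha0 hx1
          have hx3 : 0 < 1 - x - α := by rw [hbdef] at hx2; linarith
          exact ne_of_gt (by positivity)
      have hFTC := intervalIntegral.integral_eq_sub_of_hasDerivAt hderiv hintg
      rw [hFTC]
      have e1 : 1 - α - b = b := by rw [hbdef]; ring
      have e2 : 1 - α - a = θ := by rw [hadef]; ring
      have e3 : 1 - θ - α = a := by rw [hadef]; ring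
      rw [e1, e2, e3, sub_self, Real.log_div (ne_of_gt (by linarith)) (ne_of_gt ha0)]
      ring
    · rw [Set.indicator_of_notMem hα]
      have hempty : ∀ x : ℝ, (x, 1 - x - α) ∉ S := by
        intro x hmem
        obtain ⟨c1, c2, c3⟩ := hmem
        simp only at c1 c2 c3
        rw [Set.mem_Icc] at hα
        push_neg at hα
        rcases le_or_gt (1 - 2*θ) α with h | h
        · have := hα h; linarith
        · linarith
      have : (fun x => S.indicator f (x, 1 - x - α)) = fun _ => (0:ℝ) := by
        funext x
        exact Set.indicator_of_notMem (hempty x) f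
      rw [this, integral_zero]
  simp only [hkey]
  rw [integral_indicator measurableSet_Icc, MeasureTheory.integral_Icc_eq_integral_Ioc,
    ← intervalIntegral.integral_of_le (by linarith : (1:ℝ) - 2*θ ≤ 1/2)]
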